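/- Let Ω be a measurable space, let K and K' be measurable kernels from Ω to probability measures on Ω, let ε ≥ 0 and let m : Ω × Ω → ℝ. Suppose K satisfies ε·m-privacy, i.e. K(b)(Z) ≤ exp(ε·m(b, b'))·K(b')(Z) for all b, b' ∈ Ω and measurable Z. Then the composed kernel b ↦ (K(b)).bind K', whose value on a measurable set Z is ∫ K'(x)(Z) d(K(b))(x), also satisfies ε·m-privacy: for all b, b' ∈ Ω and all measurable Z, ((K(b)).bind K')(Z) ≤ exp(ε·m(b, b'))·((K(b')).bind K')(Z). (Privacy does not decrease under probabilistic post-processing.) -/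

import Mathlib

open MeasureTheory ProbabilityTheory

/-- Privacy is preserved under probabilistic post-processing: if the Markov
kernel `K` satisfies `ε·m`-privacy, then so does the composed kernel `b ↦ (K b).bind K'`
for any Markov kernel `K'`. -/
theorem privacy_post_processing_bind {Ω : Type*} [MeasurableSpace Ω]
    (K K' : Kernel Ω Ω) [IsMarkovKernel K] [IsMarkovKernel K']
    (ε : ℝ) (hε : 0 ≤ ε) (m : Ω × Ω → ℝ)
    (hK : ∀ b b' (Z : Set Ω), MeasurableSet Z →
      K b Z ≤ ENNReal.ofReal (Real.exp (ε * m (b, b'))) * K b' Z) :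
    ∀ b b' (Z : Set Ω), MeasurableSet Z →
      ((K b).bind fun x => K' x) Z ≤
        ENNReal.ofReal (Real.exp (ε * m (b, b'))) * ((K b').bind fun x => K' x) Z := by
  intro b b' Z hZ
  set c := ENNReal.ofReal (Real.exp (ε * m (b, b')))
  have hle : K b ≤ c • K b' := by
    refine Measure.le_iff.2 fun s hs => ?_
    simpa [Measure.smul_apply, smul_eq_mul] using hK b b' s hs
  rw [Measure.bind_apply hZ (K'.measurable.aemeasurable),
      Measure.bind_apply hZ (K'.measurable.aemeasurable)]
  calc ∫⁻ x, K' x Z ∂(K b) ≤ ∫⁻ x, K' x Z ∂(c • K b') :=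
        lintegral_mono' hle le_rfl
    _ = c * ∫⁻ x, K' x Z ∂(K b') := by rw [lintegral_smul_measure, smul_eq_mul]
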